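/- Let p_j = u_j v̄_j − 1 and q_j = p_j u_{j+1} + v̄_j p_{j+1}, and let D_n(m) be the n×n tridiagonal determinant with diagonal entries q_m, q_{m+1}, …, q_{m+n−1}, superdiagonal entries −p_m, …, −p_{m+n−2}, and subdiagonal entries −u_{m+1}v̄_{m+1}p_{m+2}, …, −u_{m+n−1}v̄_{m+n−1}p_{m+n}. Then D_n(m) = ∏_{i=1}^{n−1}(u_{m+i}v̄_{m+i} − 1) · Σ_{j=0}^{n} ( ∏_{k=0}^{j−1} v̄_{m+k} · (u_{m+j}v̄_{m+j} − 1) · ∏_{k=j+1}^{n} u_{m+k} ). -/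

import Mathlib

open Matrix Finset

/-- `p_j = u_j v̄_j − 1`. -/
def pBKP (u vb : ℤ → ℂ) (j : ℤ) : ℂ := u j * vb j - 1

/-- `q_j = p_j u_{j+1} + v̄_j p_{j+1}`. -/
def qBKP (u vb : ℤ → ℂ) (j : ℤ) : ℂ :=
  pBKP u vb j * u (j + 1) + vb j * pBKP u vb (j + 1)

/-- The `n×n` tridiagonal matrix whose determinant is `D_n(m)`. -/
def triMat (u vb : ℤ → ℂ) (n : ℕ) (m : ℤ) : Matrix (Fin n) (Fin n) ℂ :=
  Matrix.of fun i j =>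
    if i = j then qBKP u vb (m + i)
    else if (j : ℕ) = (i : ℕ) + 1 then -pBKP u vb (m + i)
    else if (i : ℕ) = (j : ℕ) + 1 then
      -(u (m + i) * vb (m + i) * pBKP u vb (m + i + 1))
    else 0

lemma triMat_apply (u vb : ℤ → ℂ) (n : ℕ) (m : ℤ) (i j : Fin n) :
    triMat u vb n m i j =
      if (i:ℕ) = (j:ℕ) then qBKP u vb (m + (i:ℕ))
      else if (j : ℕ) = (i : ℕ) + 1 then -pBKP u vb (m + (i:ℕ))
      else if (i : ℕ) = (j : ℕ) + 1 then
        -(u (m + (i:ℕ)) * vb (m + (i:ℕ)) * pBKP u vb (m + (i:ℕ) + 1))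
      else 0 := by
  simp only [triMat, of_apply, Fin.ext_iff]

lemma fin_val_succAbove {n : ℕ} (p : Fin (n+1)) (i : Fin n) :
    ((p.succAbove i) : ℕ) = if (i:ℕ) < (p:ℕ) then (i:ℕ) else (i:ℕ)+1 := by
  rcases lt_or_ge (Fin.castSucc i) p with h|h
  · rw [Fin.succAbove_of_castSucc_lt _ _ h, if_pos (show (i:ℕ) < (p:ℕ) from h), Fin.coe_castSucc]
  · rw [Fin.succAbove_of_le_castSucc _ _ h, if_neg (by rw [not_lt]; exact h), Fin.val_succ]

lemma triMat_zero (u vb : ℤ → ℂ) {n : ℕ} (m : ℤ) (i j : Fin n)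
    (h1 : (i:ℕ) ≠ (j:ℕ)) (h2 : (j:ℕ) ≠ (i:ℕ) + 1) (h3 : (i:ℕ) ≠ (j:ℕ) + 1) :
    triMat u vb n m i j = 0 := by
  rw [triMat_apply, if_neg h1, if_neg h2, if_neg h3]

lemma triMat_diag (u vb : ℤ → ℂ) {n : ℕ} (m : ℤ) (i j : Fin n) (h : (i:ℕ) = (j:ℕ)) :
    triMat u vb n m i j = qBKP u vb (m + (i:ℕ)) := by
  rw [triMat_apply, if_pos h]

lemma triMat_sup (u vb : ℤ → ℂ) {n : ℕ} (m : ℤ) (i j : Fin n) (h : (j:ℕ) = (i:ℕ) + 1) :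
    triMat u vb n m i j = -pBKP u vb (m + (i:ℕ)) := by
  rw [triMat_apply, if_neg (by omega), if_pos h]

lemma triMat_sub (u vb : ℤ → ℂ) {n : ℕ} (m : ℤ) (i j : Fin n) (h : (i:ℕ) = (j:ℕ) + 1) :
    triMat u vb n m i j =
      -(u (m + (i:ℕ)) * vb (m + (i:ℕ)) * pBKP u vb (m + (i:ℕ) + 1)) := by
  rw [triMat_apply, if_neg (by omega), if_neg (by omega), if_pos h]

lemma triMat_congr (u vb : ℤ → ℂ) {n n' : ℕ} (m : ℤ) (i j : Fin n) (i' j' : Fin n')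
    (hi : (i:ℕ) = (i':ℕ)) (hj : (j:ℕ) = (j':ℕ)) :
    triMat u vb n m i j = triMat u vb n' m i' j' := by
  rw [triMat_apply, triMat_apply, hi, hj]

lemma triMat_submatrix (u vb : ℤ → ℂ) (n : ℕ) (m : ℤ) :
    (triMat u vb (n+1) m).submatrix Fin.castSucc Fin.castSucc = triMat u vb n m := by
  ext i j
  exact triMat_congr u vb m _ _ i j (Fin.coe_castSucc i) (Fin.coe_castSucc j)

lemma detM (u vb : ℤ → ℂ) (n : ℕ) (m : ℤ) :
    ((triMat u vb (n+2) m).submatrix (Fin.last (n+1)).succAbove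
        ((Fin.last n).castSucc.succAbove)).det
      = -pBKP u vb (m + (n:ℕ)) * (triMat u vb n m).det := by
  have hv1 : ∀ i : Fin (n+1), (((Fin.last (n+1)).succAbove i : Fin (n+2)) : ℕ) = (i:ℕ) := by
    intro i; rw [Fin.succAbove_last_apply, Fin.coe_castSucc]
  have hv0 : ∀ i : Fin n, (((Fin.last n).succAbove i : Fin (n+1)) : ℕ) = (i:ℕ) := by
    intro i; rw [Fin.succAbove_last_apply, Fin.coe_castSucc]
  have hcol : ∀ k : Fin (n+1), ((((Fin.last n).castSucc.succAbove k) : Fin (n+2)) : ℕ)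
      = if (k:ℕ) < n then (k:ℕ) else (k:ℕ)+1 := by
    intro k; rw [fin_val_succAbove, Fin.coe_castSucc, Fin.val_last]
  rw [det_succ_column _ (Fin.last n), Fin.sum_univ_castSucc]
  have h0 : ∀ i : Fin n,
      ((triMat u vb (n+2) m).submatrix (Fin.last (n+1)).succAbove
        ((Fin.last n).castSucc.succAbove)) (Fin.castSucc i) (Fin.last n) = 0 := by
    intro i
    rw [Matrix.submatrix_apply]
    refine triMat_zero u vb m _ _ ?_ ?_ ?_ <;>
      rw [hv1, hcol] <;> simp [Fin.coe_castSucc, Fin.val_last] <;> omega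
  rw [Finset.sum_eq_zero (fun i _ => by rw [h0 i]; ring)]
  have hentry : ((triMat u vb (n+2) m).submatrix (Fin.last (n+1)).succAbove
      ((Fin.last n).castSucc.succAbove)) (Fin.last n) (Fin.last n)
      = -pBKP u vb (m + (n:ℕ)) := by
    rw [Matrix.submatrix_apply]
    have h := triMat_sup u vb (n := n+2) m ((Fin.last (n+1)).succAbove (Fin.last n))
      (((Fin.last n).castSucc.succAbove (Fin.last n)))
      (by rw [hv1, hcol]; simp [Fin.val_last])
    rw [h, hv1, Fin.val_last]
  have hminor : (((triMat u vb (n+2) m).submatrix (Fin.last (n+1)).succAbove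
      ((Fin.last n).castSucc.succAbove)).submatrix (Fin.last n).succAbove
      (Fin.last n).succAbove) = triMat u vb n m := by
    ext i k
    rw [Matrix.submatrix_apply, Matrix.submatrix_apply]
    refine triMat_congr u vb m _ _ i k ?_ ?_
    · rw [hv1, hv0]
    · rw [hcol, hv0, if_pos k.isLt]
  rw [hentry, hminor, Fin.val_last]
  rw [show ((-1:ℂ))^(n+n) = 1 by rw [← two_mul, pow_mul]; norm_num]
  ring

lemma det_rec (u vb : ℤ → ℂ) (n : ℕ) (m : ℤ) :
    (triMat u vb (n+2) m).det
      = qBKP u vb (m + ((n+1 : ℕ):ℤ)) * (triMat u vb (n+1) m).det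
        - u (m + ((n+1:ℕ):ℤ)) * vb (m + ((n+1:ℕ):ℤ)) * pBKP u vb (m + ((n+1:ℕ):ℤ) + 1)
          * pBKP u vb (m + (n:ℕ)) * (triMat u vb n m).det := by
  rw [det_succ_row _ (Fin.last (n+1)), Fin.sum_univ_castSucc, Fin.sum_univ_castSucc]
  have h0 : ∀ j : Fin n, triMat u vb (n+2) m (Fin.last (n+1)) (j.castSucc.castSucc) = 0 := by
    intro j
    have := j.isLt
    refine triMat_zero u vb m _ _ ?_ ?_ ?_ <;> simp [Fin.val_last] <;> omega
  rw [Finset.sum_eq_zero (fun j _ => by rw [h0 j]; ring)]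
  have hsub : triMat u vb (n+2) m (Fin.last (n+1)) ((Fin.last n).castSucc)
      = -(u (m + ((n+1:ℕ):ℤ)) * vb (m + ((n+1:ℕ):ℤ)) * pBKP u vb (m + ((n+1:ℕ):ℤ) + 1)) := by
    rw [triMat_sub u vb m _ _ (by simp [Fin.val_last]), Fin.val_last]
  have hdiag : triMat u vb (n+2) m (Fin.last (n+1)) (Fin.last (n+1))
      = qBKP u vb (m + ((n+1:ℕ):ℤ)) := by
    rw [triMat_diag u vb m _ _ rfl, Fin.val_last]
  rw [hsub, hdiag, detM]
  rw [show (Fin.last (n+1)).succAbove = Fin.castSucc from Fin.succAbove_last,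
    show (Fin.last (n+1)) = Fin.last (n+1) from rfl]
  rw [triMat_submatrix u vb (n+1) m]
  rw [show (((Fin.last (n+1) : Fin (n+2)) :ℕ) + ((Fin.last (n+1) : Fin (n+2)) :ℕ)) = 2*(n+1)
      by simp [Fin.val_last]; ring]
  rw [show (((Fin.last (n+1) : Fin (n+2)) :ℕ) + (((Fin.last n).castSucc : Fin (n+2)) :ℕ)) = 2*n+1
      by simp [Fin.val_last]; ring]
  rw [pow_mul, pow_succ, pow_mul]
  norm_num
  ring

/-- The sum appearing in the formula. -/
noncomputable def Svb (u vb : ℤ → ℂ) (n : ℕ) (m : ℤ) : ℂ :=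
  ∑ j ∈ Finset.range (n + 1),
    (∏ k ∈ Finset.range j, vb (m + k)) * (u (m + j) * vb (m + j) - 1) *
      ∏ k ∈ Finset.Icc (j + 1) n, u (m + k)

lemma Svb_step (u vb : ℤ → ℂ) (n : ℕ) (m : ℤ) :
    Svb u vb (n+1) m
      = u (m + ((n+1:ℕ):ℤ)) * Svb u vb n m
        + (∏ k ∈ Finset.range (n+1), vb (m + k)) * pBKP u vb (m + ((n+1:ℕ):ℤ)) := by
  unfold Svb pBKP
  rw [Finset.sum_range_succ, Finset.Icc_eq_empty (by omega : ¬ (n+1+1 ≤ n+1)),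
    Finset.prod_empty, mul_one, Finset.mul_sum]
  congr 1
  refine Finset.sum_congr rfl fun j hj => ?_
  rw [Finset.prod_Icc_succ_top (by simp at hj; omega : j + 1 ≤ n + 1)]
  ring

lemma Svb_key (u vb : ℤ → ℂ) (n : ℕ) (m : ℤ) :
    pBKP u vb (m + ((n+1:ℕ):ℤ)) * Svb u vb (n+2) m
      = qBKP u vb (m + ((n+1:ℕ):ℤ)) * Svb u vb (n+1) m
        - u (m + ((n+1:ℕ):ℤ)) * vb (m + ((n+1:ℕ):ℤ)) * pBKP u vb (m + ((n+1:ℕ):ℤ) + 1)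
          * Svb u vb n m := by
  rw [Svb_step u vb (n+1) m, Svb_step u vb n m]
  simp only [Finset.prod_range_succ]
  unfold qBKP pBKP
  push_cast
  ring

lemma Svb_zero (u vb : ℤ → ℂ) (m : ℤ) : Svb u vb 0 m = pBKP u vb (m + ((0:ℕ):ℤ)) := by
  unfold Svb pBKP
  rw [Finset.sum_range_one, Finset.range_zero, Finset.prod_empty,
    Finset.Icc_eq_empty (by omega : ¬ (0+1 ≤ 0)), Finset.prod_empty]
  ring

lemma base1 (u vb : ℤ → ℂ) (m : ℤ) :
    (triMat u vb 1 m).det = (∏ i ∈ Finset.range 0, pBKP u vb (m + (i:ℕ) + 1)) * Svb u vb 1 m := by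
  rw [det_fin_one, triMat_diag u vb m 0 0 rfl, Svb_step, Svb_zero, Finset.range_zero,
    Finset.prod_empty, Finset.prod_range_one]
  unfold qBKP pBKP
  push_cast [Fin.val_zero]
  ring

lemma base2 (u vb : ℤ → ℂ) (m : ℤ) :
    (triMat u vb 2 m).det = (∏ i ∈ Finset.range 1, pBKP u vb (m + (i:ℕ) + 1)) * Svb u vb 2 m := by
  rw [det_fin_two, triMat_diag u vb m 0 0 rfl, triMat_diag u vb m 1 1 rfl,
    triMat_sup u vb m 0 1 rfl, triMat_sub u vb m 1 0 rfl,
    show Svb u vb 2 m = Svb u vb (1+1) m from rfl, Svb_step, Svb_step, Svb_zero,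
    Finset.prod_range_one, Finset.prod_range_one, Finset.prod_range_succ, Finset.prod_range_one]
  unfold qBKP pBKP
  push_cast [Fin.val_zero, Fin.val_one]
  ring

lemma aux (u vb : ℤ → ℂ) (m : ℤ) : ∀ n : ℕ,
    ((triMat u vb (n+1) m).det
      = (∏ i ∈ Finset.range n, pBKP u vb (m + (i:ℕ) + 1)) * Svb u vb (n+1) m)
    ∧ ((triMat u vb (n+2) m).det
      = (∏ i ∈ Finset.range (n+1), pBKP u vb (m + (i:ℕ) + 1)) * Svb u vb (n+2) m) := by
  intro n
  induction n with
  | zero => exact ⟨base1 u vb m, base2 u vb m⟩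
  | succ k ih =>
    refine ⟨ih.2, ?_⟩
    rw [det_rec u vb (k+1) m, ih.1, ih.2]
    have hkey := Svb_key u vb (k+1) m
    rw [Finset.prod_range_succ, Finset.prod_range_succ, Finset.prod_range_succ]
    push_cast at hkey ⊢
    set Pk := ∏ x ∈ Finset.range k, pBKP u vb (m + (x:ℕ) + 1) with hPk
    linear_combination (norm := ring_nf)
      (-(Pk * pBKP u vb (m + (k:ℕ) + 1))) * hkey

theorem triDet_formula (u vb : ℤ → ℂ) (n : ℕ) (hn : 1 ≤ n) (m : ℤ) :
    (triMat u vb n m).det =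
      (∏ i ∈ Finset.range (n - 1), (u (m + i + 1) * vb (m + i + 1) - 1)) *
        ∑ j ∈ Finset.range (n + 1),
          (∏ k ∈ Finset.range j, vb (m + k)) *
            (u (m + j) * vb (m + j) - 1) *
            ∏ k ∈ Finset.Icc (j + 1) n, u (m + k) := by
  cases n with
  | zero => exact absurd hn (by omega)
  | succ k =>
    have h := (aux u vb m k).1
    unfold Svb pBKP at h
    simpa using h
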